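/- The distance in Γ(d) between a d-dimensional polytope with n vertices and a d-dimensional polytope with m vertices is at most n + m + 4d. -/

import Mathlib

open Set

/-- Points of `ℝ^d`. -/
abbrev Pt (d : ℕ) := Fin d → ℝ

/-- A polytope in `ℝ^d` is the convex hull of a finite set of points. -/
def IsPolytope (d : ℕ) (P : Set (Pt d)) : Prop :=
  ∃ S : Finset (Pt d), P = convexHull ℝ (S : Set (Pt d))

/-- A set is `d`-dimensional (full-dimensional) if its affine hull is all of `ℝ^d`. -/
def FullDim (d : ℕ) (P : Set (Pt d)) : Prop := affineSpan ℝ P = ⊤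

/-- A point `x` can be inserted in `P` when the convex hull of `P ∪ {x}` has as its
vertex set (set of extreme points) exactly the vertex set of `P` together with `x`. -/
def CanInsert (d : ℕ) (P : Set (Pt d)) (x : Pt d) : Prop :=
  Set.extremePoints ℝ (convexHull ℝ (P ∪ {x})) = Set.extremePoints ℝ P ∪ {x}

/-- A vertex `v` of `P` can be deleted from `P` when the convex hull of the remaining
vertices is `d`-dimensional. -/
def CanDelete (d : ℕ) (P : Set (Pt d)) (v : Pt d) : Prop :=
  v ∈ Set.extremePoints ℝ P ∧
    FullDim d (convexHull ℝ (Set.extremePoints ℝ P \ {v}))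

/-- `Q` is obtained from `P` by an insertion move. -/
def InsertMove (d : ℕ) (P Q : Set (Pt d)) : Prop :=
  ∃ x : Pt d, CanInsert d P x ∧ Q = convexHull ℝ (P ∪ {x})

/-- `Q` is obtained from `P` by a deletion move. -/
def DeleteMove (d : ℕ) (P Q : Set (Pt d)) : Prop :=
  ∃ v : Pt d, CanDelete d P v ∧ Q = convexHull ℝ (Set.extremePoints ℝ P \ {v})

/-- Adjacency: one polytope is obtained from the other by inserting a point or
deleting a vertex. -/
def Move (d : ℕ) (P Q : Set (Pt d)) : Prop :=
  InsertMove d P Q ∨ DeleteMove d P Q ∨ InsertMove d Q P ∨ DeleteMove d Q P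

/-- There is a path of at most `n` edges from `P` to `Q` all of whose vertices lie in
the class `C` of polytopes (i.e. `P` and `Q` are at distance at most `n` in the subgraph
induced by `C`). -/
def PathLE (d : ℕ) (C : Set (Set (Pt d))) (P Q : Set (Pt d)) (n : ℕ) : Prop :=
  ∃ (m : ℕ) (f : ℕ → Set (Pt d)), m ≤ n ∧ f 0 = P ∧ f m = Q ∧
    (∀ i ≤ m, f i ∈ C) ∧ ∀ i < m, Move d (f i) (f (i + 1))

/-- The subgraph induced by the class `C` is connected. -/
def ConnectedIn (d : ℕ) (C : Set (Set (Pt d))) : Prop :=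
  ∀ P ∈ C, ∀ Q ∈ C, ∃ n, PathLE d C P Q n

/-- The vertex set of the graph `Γ(d)`: the `d`-dimensional polytopes in `ℝ^d`. -/
def Gamma (d : ℕ) : Set (Set (Pt d)) := {P | IsPolytope d P ∧ FullDim d P}

/-- The number of vertices of a polytope. -/
noncomputable def nVerts (d : ℕ) (P : Set (Pt d)) : ℕ := (Set.extremePoints ℝ P).ncard

/-- A lattice point of `ℝ^d`. -/
def IsLatticePt (d : ℕ) (x : Pt d) : Prop := ∀ i, ∃ z : ℤ, x i = (z : ℝ)

/-- A lattice polytope: all its vertices are lattice points. -/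
def IsLatticePoly (d : ℕ) (P : Set (Pt d)) : Prop :=
  ∀ v ∈ Set.extremePoints ℝ P, IsLatticePt d v

/-- The hypercube `[0,k]^d`. -/
def Cube (d k : ℕ) : Set (Pt d) := {x | ∀ i, x i ∈ Set.Icc (0 : ℝ) (k : ℝ)}

/-- The vertex set of `Λ(d)`: the `d`-dimensional lattice polytopes in `ℝ^d`. -/
def Lambda (d : ℕ) : Set (Set (Pt d)) :=
  {P | IsPolytope d P ∧ FullDim d P ∧ IsLatticePoly d P}

/-- The vertex set of `Λ(d,k)`: the `d`-dimensional lattice polytopes in `[0,k]^d`. -/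
def LambdaK (d k : ℕ) : Set (Set (Pt d)) := {P ∈ Lambda d | P ⊆ Cube d k}

/-- A facet of a polytope `P`: an exposed face of dimension `d-1`. -/
def IsFacet (d : ℕ) (P F : Set (Pt d)) : Prop :=
  IsExposed ℝ P F ∧ F.Nonempty ∧ F ≠ P ∧
    Module.finrank ℝ ↥(vectorSpan ℝ F) = d - 1

/-- `H` is the closed half-space `H_F^-(P)` bounded by the affine hull of the facet `F`
and satisfying `P ∩ H = F`. -/
def BoundingHalfspace (d : ℕ) (P F H : Set (Pt d)) : Prop :=
  ∃ (l : (Pt d) →ₗ[ℝ] ℝ) (c : ℝ), l ≠ 0 ∧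
    H = {x | l x ≤ c} ∧
    (affineSpan ℝ F : Set (Pt d)) = {x | l x = c} ∧
    P ∩ H = F

/-- The cone `C_v(P)`: the intersection of the half-spaces `H_F^-(P)` over all facets
`F` of `P` incident to `v`. -/
def Cone (d : ℕ) (P : Set (Pt d)) (v : Pt d) : Set (Pt d) :=
  {x | ∀ F H : Set (Pt d), IsFacet d P F → v ∈ F → BoundingHalfspace d P F H → x ∈ H}

/-- A set `A` is in convex position: every finite subset of `A` is the vertex set of
a polytope, namely of its own convex hull. -/
def ConvexPosition (d : ℕ) (A : Set (Pt d)) : Prop :=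
  ∀ S : Finset (Pt d), (S : Set (Pt d)) ⊆ A →
    Set.extremePoints ℝ (convexHull ℝ (S : Set (Pt d))) = (S : Set (Pt d))

section AuxDev

variable {d : ℕ}

lemma move_symm {P Q : Set (Pt d)} (h : Move d P Q) : Move d Q P := by
  rcases h with h|h|h|h
  · exact Or.inr (Or.inr (Or.inl h))
  · exact Or.inr (Or.inr (Or.inr h))
  · exact Or.inl h
  · exact Or.inr (Or.inl h)

lemma pathLE_mono {C : Set (Set (Pt d))} {P Q : Set (Pt d)} {a b : ℕ} (hab : a ≤ b)
    (h : PathLE d C P Q a) : PathLE d C P Q b := by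
  obtain ⟨m, f, hm, h0, hm', hmem, hmov⟩ := h
  exact ⟨m, f, hm.trans hab, h0, hm', hmem, hmov⟩

lemma pathLE_refl {C : Set (Set (Pt d))} {P : Set (Pt d)} (hP : P ∈ C) : PathLE d C P P 0 :=
  ⟨0, fun _ => P, le_refl _, rfl, rfl, fun _ _ => hP, fun i h => absurd h (Nat.not_lt_zero i)⟩

lemma pathLE_single {C : Set (Set (Pt d))} {P Q : Set (Pt d)} (hP : P ∈ C) (hQ : Q ∈ C)
    (h : Move d P Q) : PathLE d C P Q 1 := by
  refine ⟨1, fun i => if i = 0 then P else Q, le_refl _, by simp, by simp, ?_, ?_⟩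
  · intro i hi
    by_cases h0 : i = 0 <;> simp [h0, hP, hQ]
  · intro i hi
    have : i = 0 := by omega
    simpa [this] using h

lemma pathLE_symm {C : Set (Set (Pt d))} {P Q : Set (Pt d)} {a : ℕ}
    (h : PathLE d C P Q a) : PathLE d C Q P a := by
  obtain ⟨m, f, hm, h0, hm', hmem, hmov⟩ := h
  refine ⟨m, fun i => f (m - i), hm, by simp [hm'], by simp [h0], ?_, ?_⟩
  · intro i hi
    exact hmem _ (by omega)
  · intro i hi
    have h1 : m - i = (m - (i+1)) + 1 := by omega
    have := hmov (m - (i+1)) (by omega)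
    simp only []
    rw [h1]
    exact move_symm this

lemma pathLE_trans {C : Set (Set (Pt d))} {P Q R : Set (Pt d)} {a b : ℕ}
    (h1 : PathLE d C P Q a) (h2 : PathLE d C Q R b) : PathLE d C P R (a + b) := by
  obtain ⟨m1, f, hm1, hf0, hfm, hfmem, hfmov⟩ := h1
  obtain ⟨m2, g, hm2, hg0, hgm, hgmem, hgmov⟩ := h2
  refine ⟨m1 + m2, fun i => if i < m1 then f i else g (i - m1), by omega, ?_, ?_, ?_, ?_⟩
  · by_cases h : 0 < m1
    · simpa [h] using hf0
    · have : m1 = 0 := by omega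
      simp only [this] at hfm hf0
      simp [this, hg0, hfm.symm.trans hf0]
  · have : ¬ (m1 + m2 < m1) := by omega
    simp only [this, if_false]
    simpa using hgm
  · intro i hi
    by_cases h : i < m1
    · simpa [h] using hfmem i (by omega)
    · simp only [h, if_false]
      exact hgmem _ (by omega)
  · intro i hi
    by_cases h : i < m1
    · by_cases h' : i + 1 < m1
      · simpa [h, h'] using hfmov i h
      · have : i + 1 = m1 := by omega
        have hlt : ¬ (m1 < m1) := lt_irrefl m1
        simp only [h, if_true, h', if_false, this, Nat.sub_self, hg0, hlt]
        rw [← this] at hfm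
        rw [← hfm]
        exact hfmov i h
    · have h' : ¬ (i + 1 < m1) := by omega
      simp only [h, h', if_false]
      have : i + 1 - m1 = (i - m1) + 1 := by omega
      rw [this]
      exact hgmov (i - m1) (by omega)

lemma conv_image_eq {n : ℕ} (p : Fin n → Pt d) (s : Finset (Fin n)) :
    convexHull ℝ (p '' ↑s) = {z | ∃ w : Fin n → ℝ, (∀ i, 0 ≤ w i) ∧ (∀ i, i ∉ s → w i = 0)
      ∧ ∑ i, w i = 1 ∧ ∑ i, w i • p i = z} := by
  classical
  apply Set.Subset.antisymm
  · apply convexHull_min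
    · rintro y ⟨i, hi, rfl⟩
      rw [Finset.mem_coe] at hi
      refine ⟨fun j => if j = i then 1 else 0, ?_, ?_, by simp, by simp⟩
      · intro j; dsimp only; split <;> norm_num
      · intro j hj
        have : j ≠ i := fun h => hj (h ▸ hi)
        simp [this]
    · rintro z₁ ⟨w₁, hw₁0, hw₁s, hw₁1, hc₁⟩ z₂ ⟨w₂, hw₂0, hw₂s, hw₂1, hc₂⟩ a b ha hb hab
      refine ⟨fun i => a * w₁ i + b * w₂ i, ?_, ?_, ?_, ?_⟩
      · intro i
        exact add_nonneg (mul_nonneg ha (hw₁0 i)) (mul_nonneg hb (hw₂0 i))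
      · intro i hi; dsimp only; rw [hw₁s i hi, hw₂s i hi]; ring
      · rw [Finset.sum_add_distrib, ← Finset.mul_sum, ← Finset.mul_sum, hw₁1, hw₂1]
        linarith
      · rw [Finset.sum_congr rfl (fun i (_ : i ∈ Finset.univ) => by
          rw [add_smul, mul_smul, mul_smul] :
          ∀ i ∈ Finset.univ, (a * w₁ i + b * w₂ i) • p i
            = a • (w₁ i • p i) + b • (w₂ i • p i)),
          Finset.sum_add_distrib, ← Finset.smul_sum, ← Finset.smul_sum, hc₁, hc₂]
  · rintro z ⟨w, hw0, hws, hw1, rfl⟩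
    have hsum : ∑ i, w i • p i = ∑ i ∈ s, w i • p i := by
      refine (Finset.sum_subset s.subset_univ ?_).symm
      intro i _ hi; rw [hws i hi, zero_smul]
    have hsum1 : ∑ i ∈ s, w i = 1 := by
      rw [← hw1]
      exact Finset.sum_subset s.subset_univ (fun i _ hi => hws i hi)
    rw [hsum]
    exact (convex_convexHull ℝ _).sum_mem (fun i hi => hw0 i) hsum1
      (fun i hi => subset_convexHull ℝ _ (Set.mem_image_of_mem p (Finset.mem_coe.mpr hi)))

lemma mem_conv_range_iff {n : ℕ} {p : Fin n → Pt d} {z : Pt d} :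
    z ∈ convexHull ℝ (Set.range p) ↔
      ∃ w : Fin n → ℝ, (∀ i, 0 ≤ w i) ∧ ∑ i, w i = 1 ∧ ∑ i, w i • p i = z := by
  rw [← Set.image_univ, ← Finset.coe_univ, conv_image_eq]
  constructor
  · rintro ⟨w, h0, _, h1, hc⟩; exact ⟨w, h0, h1, hc⟩
  · rintro ⟨w, h0, h1, hc⟩; exact ⟨w, h0, fun i hi => absurd (Finset.mem_univ i) hi, h1, hc⟩

lemma weights_unique {n : ℕ} {p : Fin n → Pt d} (hp : AffineIndependent ℝ p)
    {w w' : Fin n → ℝ} (hw : ∑ i, w i = 1) (hw' : ∑ i, w' i = 1)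
    (h : ∑ i, w i • p i = ∑ i, w' i • p i) : w = w' := by
  refine (affineIndependent_iff_eq_of_fintype_affineCombination_eq ℝ p).mp hp w w' hw hw' ?_
  rw [Finset.affineCombination_eq_linear_combination _ _ _ hw,
      Finset.affineCombination_eq_linear_combination _ _ _ hw', h]

lemma range_diff_eq {n : ℕ} {p : Fin n → Pt d} (hp : Function.Injective p) (i : Fin n) :
    Set.range p \ {p i} = p '' ↑(Finset.univ.erase i) := by
  rw [Finset.coe_erase, Finset.coe_univ, Set.image_diff hp, Set.image_univ, Set.image_singleton]

lemma not_mem_conv_erase {n : ℕ} {p : Fin n → Pt d} (hp : AffineIndependent ℝ p) (i : Fin n) :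
    p i ∉ convexHull ℝ (p '' ↑(Finset.univ.erase i)) := by
  classical
  rw [conv_image_eq]
  rintro ⟨w, hw0, hwsupp, hw1, hcomb⟩
  have hδ : ∑ j, (fun j => if j = i then (1:ℝ) else 0) j • p j = p i := by simp
  have hu := weights_unique hp hw1 (by simp) (hcomb.trans hδ.symm)
  have hwi : w i = 1 := by rw [hu]; simp
  rw [hwsupp i (Finset.notMem_erase i _)] at hwi
  norm_num at hwi

lemma mem_extremePoints_convexHull_iff' {A : Set (Pt d)} {x : Pt d} (hx : x ∈ A) :
    x ∈ Set.extremePoints ℝ (convexHull ℝ A) ↔ x ∉ convexHull ℝ (A \ {x}) := by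
  constructor
  · intro h hmem
    have h2 := (convex_convexHull ℝ A).mem_extremePoints_iff_mem_diff_convexHull_diff.mp h
    exact h2.2 (convexHull_mono (Set.diff_subset_diff_left (subset_convexHull ℝ A)) hmem)
  · intro hnot
    rcases Set.eq_empty_or_nonempty (A \ {x}) with hAe | hAn
    · have hA : A = {x} := by
        apply Set.Subset.antisymm
        · intro a ha
          by_contra hax
          exact absurd (hAe ▸ Set.mem_diff_of_mem ha hax) (Set.notMem_empty a)
        · exact Set.singleton_subset_iff.mpr hx
      rw [hA, convexHull_singleton, extremePoints_singleton]
      exact Set.mem_singleton x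
    · have hA : A = insert x (A \ {x}) := by
        rw [Set.insert_diff_singleton, Set.insert_eq_of_mem hx]
      rw [mem_extremePoints]
      refine ⟨subset_convexHull ℝ A hx, ?_⟩
      intro x₁ hx₁ x₂ hx₂ hseg
      rw [hA, convexHull_insert hAn, mem_convexJoin] at hx₁ hx₂
      obtain ⟨p₁, hp₁, y₁, hy₁, hs₁⟩ := hx₁
      obtain ⟨p₂, hp₂, y₂, hy₂, hs₂⟩ := hx₂
      rw [Set.mem_singleton_iff] at hp₁ hp₂
      rw [hp₁] at hs₁
      rw [hp₂] at hs₂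
      obtain ⟨u₁, v₁, hu₁, hv₁, huv₁, hx₁e⟩ := hs₁
      obtain ⟨u₂, v₂, hu₂, hv₂, huv₂, hx₂e⟩ := hs₂
      obtain ⟨a, b, ha, hb, hab, hxe⟩ := hseg
      have hsum : a * (u₁ + v₁) + b * (u₂ + v₂) = a + b := by rw [huv₁, huv₂]; ring
      have h1 : a * u₁ + b * u₂ = 1 - (a * v₁ + b * v₂) := by linear_combination hsum + hab
      rw [← hx₁e, ← hx₂e] at hxe
      have e1 : (a * u₁ + b * u₂) • x + ((a * v₁) • y₁ + (b * v₂) • y₂) = x := by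
        calc (a * u₁ + b * u₂) • x + ((a * v₁) • y₁ + (b * v₂) • y₂)
            = a • (u₁ • x + v₁ • y₁) + b • (u₂ • x + v₂ • y₂) := by module
          _ = x := hxe
      have e4 : (a * v₁) • y₁ + (b * v₂) • y₂ = x - (a * u₁ + b * u₂) • x := by
        rw [eq_sub_iff_add_eq, add_comm]; exact e1
      have key : (a * v₁ + b * v₂) • x = (a * v₁) • y₁ + (b * v₂) • y₂ := by
        rw [e4, h1]; module
      rcases eq_or_lt_of_le (by positivity : (0:ℝ) ≤ a * v₁ + b * v₂) with hc | hc
      · have hv₁0 : v₁ = 0 := by nlinarith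
        have hv₂0 : v₂ = 0 := by nlinarith
        have hu₁1 : u₁ = 1 := by rw [hv₁0] at huv₁; linarith
        have hu₂1 : u₂ = 1 := by rw [hv₂0] at huv₂; linarith
        constructor
        · rw [← hx₁e, hv₁0, hu₁1]; module
        · rw [← hx₂e, hv₂0, hu₂1]; module
      · exfalso
        have hcne : (a * v₁ + b * v₂) ≠ 0 := ne_of_gt hc
        have hs1 : (a * v₁ + b * v₂) * (a * v₁ / (a * v₁ + b * v₂)) = a * v₁ := by field_simp
        have hs2 : (a * v₁ + b * v₂) * (b * v₂ / (a * v₁ + b * v₂)) = b * v₂ := by field_simp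
        have e5 : (a * v₁ + b * v₂) • ((a * v₁ / (a * v₁ + b * v₂)) • y₁
            + (b * v₂ / (a * v₁ + b * v₂)) • y₂) = (a * v₁ + b * v₂) • x := by
          rw [smul_add, smul_smul, smul_smul, hs1, hs2, key]
        have hy : (a * v₁ / (a * v₁ + b * v₂)) • y₁ + (b * v₂ / (a * v₁ + b * v₂)) • y₂ = x :=
          smul_right_injective (Pt d) hcne e5
        have hmem2 : (a * v₁ / (a * v₁ + b * v₂)) • y₁ + (b * v₂ / (a * v₁ + b * v₂)) • y₂
            ∈ convexHull ℝ (A \ {x}) := by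
          refine (convex_convexHull ℝ _) hy₁ hy₂ ?_ ?_ ?_
          · have : 0 ≤ a * v₁ := by positivity
            positivity
          · have : 0 ≤ b * v₂ := by positivity
            positivity
          · field_simp
        rw [hy] at hmem2
        exact hnot hmem2
lemma extremePoints_conv_eq_self {A : Set (Pt d)} (h : ∀ x ∈ A, x ∉ convexHull ℝ (A \ {x})) :
    Set.extremePoints ℝ (convexHull ℝ A) = A := by
  apply Set.Subset.antisymm extremePoints_convexHull_subset
  intro x hx
  exact (mem_extremePoints_convexHull_iff' hx).mpr (h x hx)

lemma isPolytope_conv_finite {A : Set (Pt d)} (hA : A.Finite) : IsPolytope d (convexHull ℝ A) :=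
  ⟨hA.toFinset, by rw [Set.Finite.coe_toFinset]⟩

lemma gamma_conv_finite {A : Set (Pt d)} (hA : A.Finite) (hspan : affineSpan ℝ A = ⊤) :
    convexHull ℝ A ∈ Gamma d :=
  ⟨isPolytope_conv_finite hA, by rw [FullDim, affineSpan_convexHull]; exact hspan⟩

lemma gamma_minkowski {P : Set (Pt d)} (hP : P ∈ Gamma d) :
    convexHull ℝ (Set.extremePoints ℝ P) = P := by
  obtain ⟨hP1, hP2⟩ := hP
  obtain ⟨S, rfl⟩ := hP1
  have hcomp : IsCompact (convexHull ℝ (S : Set (Pt d))) := S.finite_toSet.isCompact_convexHull (𝕜 := ℝ)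
  have hfin : (Set.extremePoints ℝ (convexHull ℝ (S : Set (Pt d)))).Finite :=
    S.finite_toSet.subset extremePoints_convexHull_subset
  have h1 := closure_convexHull_extremePoints hcomp (convex_convexHull ℝ _)
  exact ((hfin.isCompact_convexHull (𝕜 := ℝ)).isClosed.closure_eq).symm.trans h1

lemma gamma_ext_finite {P : Set (Pt d)} (hP : P ∈ Gamma d) : (Set.extremePoints ℝ P).Finite := by
  obtain ⟨S, hS⟩ := hP.1
  exact S.finite_toSet.subset (hS ▸ extremePoints_convexHull_subset)

lemma gamma_span_ext {P : Set (Pt d)} (hP : P ∈ Gamma d) :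
    affineSpan ℝ (Set.extremePoints ℝ P) = ⊤ := by
  have h2 := hP.2
  rw [FullDim] at h2
  rw [← gamma_minkowski hP, affineSpan_convexHull] at h2
  exact h2

noncomputable def SplxP {d : ℕ} (b : AffineBasis (Fin (d+1)) ℝ (Pt d)) : Set (Pt d) :=
  convexHull ℝ (Set.range ⇑b)

lemma splx_not_mem (b : AffineBasis (Fin (d+1)) ℝ (Pt d)) (i : Fin (d+1)) :
    b i ∉ convexHull ℝ (Set.range ⇑b \ {b i}) := by
  rw [range_diff_eq b.ind.injective]
  exact not_mem_conv_erase b.ind i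

lemma splx_ext (b : AffineBasis (Fin (d+1)) ℝ (Pt d)) :
    Set.extremePoints ℝ (SplxP b) = Set.range ⇑b := by
  apply extremePoints_conv_eq_self
  rintro x ⟨i, rfl⟩
  exact splx_not_mem b i

lemma splx_gamma (b : AffineBasis (Fin (d+1)) ℝ (Pt d)) : SplxP b ∈ Gamma d :=
  gamma_conv_finite (Set.finite_range _) b.tot

lemma basis_of_span {f : Fin (d+1) → Pt d} (hspan : affineSpan ℝ (Set.range f) = ⊤) :
    AffineIndependent ℝ f := by
  rw [affineIndependent_iff_le_finrank_vectorSpan ℝ f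
    (by simp : Fintype.card (Fin (d+1)) = d + 1)]
  rw [AffineSubspace.vectorSpan_eq_top_of_affineSpan_eq_top ℝ (Pt d) (Pt d) hspan, finrank_top]
  rw [Module.finrank_fin_fun]

lemma sum_split {n : ℕ} (k : Fin n) (g : Fin n → Pt d) :
    ∑ j, g j = g k + ∑ j ∈ Finset.univ.erase k, g j :=
  (Finset.add_sum_erase _ g (Finset.mem_univ k)).symm

lemma sum_split_r {n : ℕ} (k : Fin n) (g : Fin n → ℝ) :
    ∑ j, g j = g k + ∑ j ∈ Finset.univ.erase k, g j :=
  (Finset.add_sum_erase _ g (Finset.mem_univ k)).symm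

lemma sum_update_smul {n : ℕ} (p : Fin n → Pt d) (k : Fin n) (x : Pt d) (f : Fin n → ℝ) :
    ∑ j, f j • Function.update p k x j = f k • x + ∑ j ∈ Finset.univ.erase k, f j • p j := by
  classical
  rw [sum_split k]
  congr 1
  · rw [Function.update_self]
  · exact Finset.sum_congr rfl fun j hj => by
      rw [Function.update_of_ne (Finset.ne_of_mem_erase hj)]

lemma range_update {n : ℕ} {p : Fin n → Pt d} (hp : Function.Injective p) {x : Pt d}
    (hx : x ∉ Set.range p) (k : Fin n) :
    Set.range (Function.update p k x) = insert x (Set.range p \ {p k}) := by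
  classical
  ext y
  constructor
  · rintro ⟨j, rfl⟩
    rcases eq_or_ne j k with rfl | hjk
    · rw [Function.update_self]; exact Set.mem_insert _ _
    · rw [Function.update_of_ne hjk]
      exact Set.mem_insert_of_mem _
        ⟨Set.mem_range_self j, fun h => hjk (hp (Set.mem_singleton_iff.mp h))⟩
  · rintro (rfl | ⟨⟨j, rfl⟩, hy⟩)
    · exact ⟨k, Function.update_self k y p⟩
    · have hjk : j ≠ k := fun h => hy (by rw [h]; exact Set.mem_singleton _)
      exact ⟨j, Function.update_of_ne hjk x p⟩
lemma flip_ext (b : AffineBasis (Fin (d+1)) ℝ (Pt d)) (w : Fin (d+1) → ℝ) (x : Pt d)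
    (hx : ∑ i, w i • b i = x) (hw1 : ∑ i, w i = 1)
    (i₀ j₁ j₂ : Fin (d+1)) (hneg : w i₀ < 0) (hj : j₁ ≠ j₂) (h1 : 0 < w j₁) (h2 : 0 < w j₂) :
    (x ∉ convexHull ℝ (Set.range ⇑b)) ∧
    Set.extremePoints ℝ (convexHull ℝ (insert x (Set.range ⇑b))) = insert x (Set.range ⇑b) := by
  classical
  have hxout : x ∉ convexHull ℝ (Set.range ⇑b) := by
    rw [mem_conv_range_iff]
    rintro ⟨u, hu0, hu1, huc⟩
    have := weights_unique b.ind hw1 hu1 (hx.trans huc.symm)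
    rw [this] at hneg
    exact absurd (hu0 i₀) (not_le.mpr hneg)
  have hxnr : x ∉ Set.range ⇑b := fun h => hxout (subset_convexHull ℝ _ h)
  set q : Fin (d+2) → Pt d := Fin.cons x ⇑b with hq
  have hqinj : Function.Injective q := Fin.cons_injective_iff.mpr ⟨hxnr, b.ind.injective⟩
  have hqrange : Set.range q = insert x (Set.range ⇑b) := Fin.range_cons x ⇑b
  refine ⟨hxout, ?_⟩
  apply extremePoints_conv_eq_self
  rintro y (rfl | ⟨i, rfl⟩)
  · rw [Set.insert_diff_self_of_notMem hxnr]
    exact hxout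
  · have hxbi : x ≠ b i := fun h => hxnr (h ▸ Set.mem_range_self i)
    have hset : insert x (Set.range ⇑b) \ {b i} = q '' ↑(Finset.univ.erase i.succ) := by
      rw [← range_diff_eq hqinj i.succ, hqrange]
      congr 1
    rw [hset, conv_image_eq]
    rintro ⟨u, hu0, husupp, hu1, huc⟩
    have husucc : u i.succ = 0 := husupp i.succ (Finset.notMem_erase _ _)
    have hexp : ∑ j : Fin (d+2), u j • q j
        = u 0 • x + ∑ j : Fin (d+1), u (j.succ) • b j := by
      rw [Fin.sum_univ_succ]
      simp [hq, Fin.cons_succ]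
    have hxw : u 0 • x = ∑ j : Fin (d+1), (u 0 * w j) • b j := by
      rw [← hx, Finset.smul_sum]
      exact Finset.sum_congr rfl fun j _ => by rw [smul_smul]
    have hWc : ∑ j : Fin (d+1), (u 0 * w j + u j.succ) • b j = b i := by
      rw [← huc, hexp, hxw, ← Finset.sum_add_distrib]
      exact Finset.sum_congr rfl fun j _ => by rw [add_smul]
    have hW1 : ∑ j : Fin (d+1), (u 0 * w j + u j.succ) = 1 := by
      rw [Finset.sum_add_distrib, ← Finset.mul_sum, hw1, mul_one]
      rw [Fin.sum_univ_succ] at hu1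
      linarith [hu1]
    have hδ : ∑ j : Fin (d+1), (fun j => if j = i then (1:ℝ) else 0) j • b j = b i := by simp
    have huniq := weights_unique b.ind hW1 (by simp) (hWc.trans hδ.symm)
    have hWi : u 0 * w i + u i.succ = 1 := by
      have := congrFun huniq i
      simpa using this
    rw [husucc, add_zero] at hWi
    have hu0pos : 0 < u 0 := by
      rcases lt_trichotomy (u 0) 0 with h | h | h
      · exact absurd (hu0 0) (not_le.mpr h)
      · rw [h] at hWi; norm_num at hWi
      · exact h
    obtain ⟨j, hjne, hjpos⟩ : ∃ j, j ≠ i ∧ 0 < w j := by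
      rcases eq_or_ne j₁ i with rfl | hne
      · exact ⟨j₂, fun h => hj h.symm, h2⟩
      · exact ⟨j₁, hne, h1⟩
    have hWj : u 0 * w j + u j.succ = 0 := by
      have := congrFun huniq j
      simpa [hjne] using this
    nlinarith [hu0 j.succ]

lemma flip_path (b : AffineBasis (Fin (d+1)) ℝ (Pt d)) (w : Fin (d+1) → ℝ) (x : Pt d)
    (hx : ∑ i, w i • b i = x) (hw1 : ∑ i, w i = 1)
    (k i₀ j₁ j₂ : Fin (d+1)) (hneg : w i₀ < 0) (hj : j₁ ≠ j₂) (h1 : 0 < w j₁) (h2 : 0 < w j₂)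
    (hk : w k ≠ 0) :
    ∃ b' : AffineBasis (Fin (d+1)) ℝ (Pt d), ⇑b' = Function.update ⇑b k x ∧
      PathLE d (Gamma d) (SplxP b) (SplxP b') 2 := by
  classical
  obtain ⟨hxout, hext⟩ := flip_ext b w x hx hw1 i₀ j₁ j₂ hneg hj h1 h2
  have hxnr : x ∉ Set.range ⇑b := fun h => hxout (subset_convexHull ℝ _ h)
  have hxbk : x ≠ b k := fun h => hxnr (h ▸ Set.mem_range_self k)
  -- the new vertex set
  have hrupd : Set.range (Function.update ⇑b k x) = insert x (Set.range ⇑b \ {b k}) :=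
    range_update b.ind.injective hxnr k
  -- span of the new set
  have hbk_mem : b k ∈ affineSpan ℝ (Set.range (Function.update ⇑b k x)) := by
    set t : ℝ := (w k)⁻¹ with ht
    set μ : Fin (d+1) → ℝ := fun j => if j = k then t else -t * w j with hμ
    have hμ1 : ∑ j, μ j = 1 := by
      rw [sum_split_r k]
      have e1 : μ k = t := by rw [hμ]; simp
      have e2 : ∑ j ∈ Finset.univ.erase k, μ j = -t * ∑ j ∈ Finset.univ.erase k, w j := by
        rw [Finset.mul_sum]
        exact Finset.sum_congr rfl fun j hj' => by
          rw [hμ]; simp [Finset.ne_of_mem_erase hj']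
      have e3 : ∑ j ∈ Finset.univ.erase k, w j = 1 - w k := by
        have := sum_split_r k w
        rw [hw1] at this; linarith
      rw [e1, e2, e3, ht]
      field_simp
      ring
    have hμc : ∑ j, μ j • Function.update ⇑b k x j = b k := by
      rw [sum_update_smul]
      have e1 : μ k = t := by rw [hμ]; simp
      have e2 : ∀ j ∈ Finset.univ.erase k, μ j • b j = -(t • (w j • b j)) := by
        intro j hj'
        rw [hμ]
        simp only [Finset.ne_of_mem_erase hj', if_false]
        rw [neg_mul, neg_smul, smul_smul]
      rw [e1, Finset.sum_congr rfl e2, Finset.sum_neg_distrib, ← Finset.smul_sum]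
      have e3 : ∑ j ∈ Finset.univ.erase k, w j • b j = x - w k • b k := by
        have := sum_split k (fun j => w j • b j)
        rw [hx] at this
        rw [eq_sub_iff_add_eq, add_comm]
        exact this.symm
      rw [e3, ← hx]
      rw [smul_sub, smul_smul, ht, inv_mul_cancel₀ hk, one_smul, hx]
      module
    have := affineCombination_mem_affineSpan (s := Finset.univ) (w := μ)
      hμ1 (Function.update ⇑b k x)
    rw [Finset.affineCombination_eq_linear_combination _ _ _ hμ1, hμc] at this
    exact this
  have hspan' : affineSpan ℝ (Set.range (Function.update ⇑b k x)) = ⊤ := by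
    refine le_antisymm le_top ?_
    rw [← b.tot]
    rw [affineSpan_le]
    rintro y ⟨j, rfl⟩
    rcases eq_or_ne j k with rfl | hjk
    · exact hbk_mem
    · apply mem_affineSpan
      exact ⟨j, Function.update_of_ne hjk x ⇑b⟩
  have hind' : AffineIndependent ℝ (Function.update ⇑b k x) := basis_of_span hspan'
  refine ⟨⟨Function.update ⇑b k x, hind', hspan'⟩, rfl, ?_⟩
  set Q : Set (Pt d) := convexHull ℝ (insert x (Set.range ⇑b)) with hQdef
  have hQspan : affineSpan ℝ (insert x (Set.range ⇑b)) = ⊤ :=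
    le_antisymm le_top (b.tot ▸ affineSpan_mono ℝ (Set.subset_insert x _))
  have hQΓ : Q ∈ Gamma d := gamma_conv_finite ((Set.finite_range ⇑b).insert x) hQspan
  have hunion : SplxP b ∪ {x} = convexHull ℝ (Set.range ⇑b) ∪ {x} := rfl
  have hconvQ : convexHull ℝ (SplxP b ∪ {x}) = Q := by
    rw [hunion, convexHull_convexHull_union_left, Set.union_singleton]
  have move1 : Move d (SplxP b) Q := by
    left
    refine ⟨x, ?_, hconvQ.symm⟩
    rw [CanInsert, hconvQ, hQdef, hext, splx_ext, Set.union_singleton]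
  have hQext : Set.extremePoints ℝ Q = insert x (Set.range ⇑b) := hext
  have hdiff : Set.extremePoints ℝ Q \ {b k} = Set.range (Function.update ⇑b k x) := by
    rw [hQext, hrupd, Set.insert_diff_singleton_comm hxbk]
  have move2 : Move d Q (SplxP ⟨Function.update ⇑b k x, hind', hspan'⟩) := by
    right; left
    refine ⟨b k, ⟨?_, ?_⟩, ?_⟩
    · rw [hQext]; exact Set.mem_insert_of_mem _ (Set.mem_range_self k)
    · rw [FullDim, hdiff, affineSpan_convexHull]
      exact hspan'
    · rw [hdiff]; rfl
  have p1 : PathLE d (Gamma d) (SplxP b) Q 1 := pathLE_single (splx_gamma b) hQΓ move1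
  have p2 : PathLE d (Gamma d) Q (SplxP ⟨Function.update ⇑b k x, hind', hspan'⟩) 1 :=
    pathLE_single hQΓ (splx_gamma _) move2
  exact pathLE_trans p1 p2
lemma coord_sum (b : AffineBasis (Fin (d+1)) ℝ (Pt d)) (v : Pt d) :
    ∑ i, b.coord i v = 1 := b.sum_coord_apply_eq_one v

lemma coord_comb (b : AffineBasis (Fin (d+1)) ℝ (Pt d)) (v : Pt d) :
    ∑ i, b.coord i v • b i = v := by
  have h := b.affineCombination_coord_eq_self v
  rwa [Finset.affineCombination_eq_linear_combination _ _ _ (b.sum_coord_apply_eq_one v)] at h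

lemma sum_three {n : ℕ} {a b c : Fin n} (hab : a ≠ b) (hac : a ≠ c) (hbc : b ≠ c)
    (f : Fin n → ℝ) (hf : ∀ i, i ≠ a → i ≠ b → i ≠ c → f i = 0) :
    ∑ i, f i = f a + f b + f c := by
  classical
  have h1 : ∑ i, f i = ∑ i ∈ ({a, b, c} : Finset (Fin n)), f i := by
    refine (Finset.sum_subset (Finset.subset_univ _) ?_).symm
    intro i _ hi
    simp only [Finset.mem_insert, Finset.mem_singleton, not_or] at hi
    exact hf i hi.1 hi.2.1 hi.2.2
  rw [h1, Finset.sum_insert (by simp [hab, hac]), Finset.sum_insert (by simp [hbc]),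
    Finset.sum_singleton, add_assoc]

lemma second_weights (b : AffineBasis (Fin (d+1)) ℝ (Pt d)) (k : Fin (d+1))
    (η β : Fin (d+1) → ℝ) (hη1 : ∑ i, η i = 1) (hηk : η k ≠ 0) (hβ1 : ∑ i, β i = 1)
    (y : Pt d) (hy : ∑ i, η i • b i = y) :
    (∑ i, (fun i => if i = k then β k / η k else β i - (β k / η k) * η i) i = 1) ∧
    (∑ i, (fun i => if i = k then β k / η k else β i - (β k / η k) * η i) i
        • Function.update ⇑b k y i = ∑ i, β i • b i) := by
  classical
  have herβ : ∑ j ∈ Finset.univ.erase k, β j = 1 - β k := by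
    have := sum_split_r k β; rw [hβ1] at this; linarith
  have herη : ∑ j ∈ Finset.univ.erase k, η j = 1 - η k := by
    have := sum_split_r k η; rw [hη1] at this; linarith
  have hcancel : β k / η k * η k = β k := div_mul_cancel₀ _ hηk
  constructor
  · rw [sum_split_r k]
    simp only [eq_self_iff_true, if_true]
    have hcongr : ∀ j ∈ Finset.univ.erase k,
        (if j = k then β k / η k else β j - β k / η k * η j) = β j - β k / η k * η j :=
      fun j hj => by simp [Finset.ne_of_mem_erase hj]
    rw [Finset.sum_congr rfl hcongr, Finset.sum_sub_distrib, ← Finset.mul_sum, herβ, herη]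
    linear_combination hcancel
  · rw [sum_update_smul]
    simp only [eq_self_iff_true, if_true]
    have h1 : (β k / η k) • y = ∑ i, (β k / η k * η i) • b i := by
      rw [← hy, Finset.smul_sum]
      exact Finset.sum_congr rfl fun i _ => smul_smul _ _ _
    have hcongr : ∀ j ∈ Finset.univ.erase k,
        (if j = k then β k / η k else β j - β k / η k * η j) • b j
          = β j • b j - (β k / η k * η j) • b j :=
      fun j hj => by rw [if_neg (Finset.ne_of_mem_erase hj), sub_smul]
    rw [Finset.sum_congr rfl hcongr, Finset.sum_sub_distrib, h1,
      sum_split k (fun i => (β k / η k * η i) • b i), hcancel,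
      sum_split k (fun i => β i • b i)]
    abel
set_option maxHeartbeats 2000000 in
lemma replace_path (hd : 2 ≤ d) (b : AffineBasis (Fin (d+1)) ℝ (Pt d)) (v : Pt d)
    (k : Fin (d+1)) (hk : b.coord k v ≠ 0) :
    ∃ b' : AffineBasis (Fin (d+1)) ℝ (Pt d), ⇑b' = Function.update ⇑b k v ∧
      PathLE d (Gamma d) (SplxP b) (SplxP b') 4 := by
  classical
  set β : Fin (d+1) → ℝ := fun i => b.coord i v with hβ
  have hβ1 : ∑ i, β i = 1 := coord_sum b v
  have hβc : ∑ i, β i • b i = v := coord_comb b v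
  have hkβ : β k ≠ 0 := hk
  have hcard : 1 < (Finset.univ.erase k).card := by
    rw [Finset.card_erase_of_mem (Finset.mem_univ k), Finset.card_univ, Fintype.card_fin]
    omega
  obtain ⟨j₁, hj₁m, j₂, hj₂m, hj12⟩ := Finset.one_lt_card.mp hcard
  have hj₁k : j₁ ≠ k := Finset.ne_of_mem_erase hj₁m
  have hj₂k : j₂ ≠ k := Finset.ne_of_mem_erase hj₂m
  rcases hkβ.lt_or_gt with hbk | hbk
  · -- case β k < 0
    obtain ⟨jp, hjpm, hjppos⟩ : ∃ j ∈ Finset.univ.erase k, 0 < β j := by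
      by_contra hcon
      push_neg at hcon
      have hs : ∑ j ∈ Finset.univ.erase k, β j ≤ 0 := Finset.sum_nonpos hcon
      have he : ∑ j ∈ Finset.univ.erase k, β j = 1 - β k := by
        have := sum_split_r k β; rw [hβ1] at this; linarith
      linarith
    have hjpk : jp ≠ k := Finset.ne_of_mem_erase hjpm
    obtain ⟨jq, hjqm⟩ : ∃ jq, jq ∈ (Finset.univ.erase k).erase jp := by
      have hpos : 0 < ((Finset.univ.erase k).erase jp).card := by
        rw [Finset.card_erase_of_mem hjpm, Finset.card_erase_of_mem (Finset.mem_univ k),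
          Finset.card_univ, Fintype.card_fin]
        omega
      exact Finset.card_pos.mp hpos
    have hjqp : jq ≠ jp := Finset.ne_of_mem_erase hjqm
    have hjqk : jq ≠ k := Finset.ne_of_mem_erase (Finset.mem_of_mem_erase hjqm)
    set T : ℝ := 1 + |β k| + |β jp| + |β jq| with hT
    have habsk : |β k| ≤ T - 1 := by
      rw [hT]; linarith [abs_nonneg (β jp), abs_nonneg (β jq)]
    have habsp : |β jp| ≤ T - 1 := by
      rw [hT]; linarith [abs_nonneg (β k), abs_nonneg (β jq)]
    have habsq : |β jq| ≤ T - 1 := by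
      rw [hT]; linarith [abs_nonneg (β k), abs_nonneg (β jp)]
    have hT1 : 1 ≤ T := by linarith [abs_nonneg (β k)]
    have hT0 : 0 < T := by linarith
    have h4T : (0:ℝ) < 4*T := by linarith
    have h8T : (0:ℝ) < 8*T := by linarith
    set η : Fin (d+1) → ℝ := fun i => if i = k then -β k/(4*T)
      else if i = jp then -(β jp/(8*T))
      else if i = jq then 1 + β k/(4*T) + β jp/(8*T) else 0 with hη
    have hηk : η k = -β k/(4*T) := by simp [hη]
    have hηp : η jp = -(β jp/(8*T)) := by simp [hη, hjpk]
    have hηq : η jq = 1 + β k/(4*T) + β jp/(8*T) := by simp [hη, hjqk, hjqp]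
    have hη1 : ∑ i, η i = 1 := by
      rw [sum_three (Ne.symm hjpk) (Ne.symm hjqk) (Ne.symm hjqp) η
        (fun i h1 h2 h3 => by simp [hη, h1, h2, h3])]
      rw [hηk, hηp, hηq]; ring
    have hηkpos : 0 < η k := by
      rw [hηk]; exact div_pos (neg_pos.mpr hbk) h4T
    have hηpneg : η jp < 0 := by
      rw [hηp]
      have : 0 < β jp/(8*T) := div_pos hjppos h8T
      linarith
    have hbk4T : -(1/4 : ℝ) ≤ β k/(4*T) := by
      rw [neg_le, ← neg_div]
      rw [div_le_div_iff₀ h4T (by norm_num : (0:ℝ) < 4)]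
      have : -β k ≤ T := by have := neg_abs_le (β k); linarith
      nlinarith
    have hηqpos : 0 < η jq := by
      rw [hηq]
      have h2 : 0 < β jp/(8*T) := div_pos hjppos h8T
      linarith
    set y : Pt d := ∑ i, η i • b i with hydef
    obtain ⟨b₁, hb₁, path1⟩ := flip_path b η y hydef.symm hη1 k jp k jq hηpneg
      (Ne.symm hjqk) hηkpos hηqpos (ne_of_gt hηkpos)
    obtain ⟨hμ1, hμc⟩ := second_weights b k η β hη1 (ne_of_gt hηkpos) hβ1 y hydef.symm
    set μ : Fin (d+1) → ℝ :=
      fun i => if i = k then β k / η k else β i - (β k / η k) * η i with hμ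
    have het : β k / η k = -(4*T) := by
      rw [hηk]
      rw [div_div_eq_mul_div]
      rw [mul_comm, mul_div_assoc]
      have : β k / -β k = -1 := by rw [div_neg, div_self hkβ]
      rw [this]; ring
    have hμk : μ k = -(4*T) := by rw [hμ]; simp only [if_pos rfl]; exact het
    have hμkneg : μ k < 0 := by rw [hμk]; linarith
    have hμp : μ jp = β jp / 2 := by
      simp only [hμ, if_neg hjpk]
      rw [het, hηp]
      field_simp
      ring
    have hμppos : 0 < μ jp := by rw [hμp]; linarith
    have hμqe : μ jq = β jq + 4*T + β k + β jp/2 := by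
      simp only [hμ, if_neg hjqk]
      rw [het, hηq]
      field_simp
      ring
    have hμqpos : 0 < μ jq := by
      rw [hμqe]
      have h1 : -(T-1) ≤ β jq := by have := neg_abs_le (β jq); linarith
      have h2 : -(T-1) ≤ β k := by have := neg_abs_le (β k); linarith
      linarith
    have hx2 : ∑ i, μ i • b₁ i = v := by
      have : ∑ i, μ i • b₁ i = ∑ i, μ i • Function.update ⇑b k y i := by
        rw [hb₁]
      rw [this, hμc, hβc]
    obtain ⟨b₂, hb₂, path2⟩ := flip_path b₁ μ v hx2 hμ1 k k jp jq hμkneg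
      (Ne.symm hjqp) hμppos hμqpos (ne_of_lt hμkneg)
    refine ⟨b₂, ?_, ?_⟩
    · rw [hb₂, hb₁, Function.update_idem]
    · exact pathLE_trans path1 path2
  · -- case 0 < β k
    set T : ℝ := 1 + |β k| + |β j₁| + |β j₂| with hT
    have habsk : |β k| ≤ T - 1 := by
      rw [hT]; linarith [abs_nonneg (β j₁), abs_nonneg (β j₂)]
    have habs1 : |β j₁| ≤ T - 1 := by
      rw [hT]; linarith [abs_nonneg (β k), abs_nonneg (β j₂)]
    have habs2 : |β j₂| ≤ T - 1 := by
      rw [hT]; linarith [abs_nonneg (β k), abs_nonneg (β j₁)]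
    have hT1 : 1 ≤ T := by linarith [abs_nonneg (β k)]
    have hT0 : 0 < T := by linarith
    have h4T : (0:ℝ) < 4*T := by linarith
    set η : Fin (d+1) → ℝ := fun i => if i = k then β k/(4*T)
      else if i = j₁ then -1
      else if i = j₂ then 2 - β k/(4*T) else 0 with hη
    have hηk : η k = β k/(4*T) := by simp [hη]
    have hη1v : η j₁ = -1 := by simp [hη, hj₁k]
    have hη2v : η j₂ = 2 - β k/(4*T) := by simp [hη, hj₂k, Ne.symm hj12]
    have hη1 : ∑ i, η i = 1 := by
      rw [sum_three (Ne.symm hj₁k) (Ne.symm hj₂k) hj12 η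
        (fun i h1 h2 h3 => by simp [hη, h1, h2, h3])]
      rw [hηk, hη1v, hη2v]; ring
    have hηkpos : 0 < η k := by rw [hηk]; exact div_pos hbk h4T
    have hbkle : β k/(4*T) ≤ 1/4 := by
      rw [div_le_div_iff₀ h4T (by norm_num : (0:ℝ) < 4)]
      have : β k ≤ T := by have := le_abs_self (β k); linarith
      nlinarith
    have hη1neg : η j₁ < 0 := by rw [hη1v]; norm_num
    have hη2pos : 0 < η j₂ := by rw [hη2v]; linarith
    set y : Pt d := ∑ i, η i • b i with hydef
    obtain ⟨b₁, hb₁, path1⟩ := flip_path b η y hydef.symm hη1 k j₁ k j₂ hη1neg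
      (Ne.symm hj₂k) hηkpos hη2pos (ne_of_gt hηkpos)
    obtain ⟨hμ1, hμc⟩ := second_weights b k η β hη1 (ne_of_gt hηkpos) hβ1 y hydef.symm
    set μ : Fin (d+1) → ℝ :=
      fun i => if i = k then β k / η k else β i - (β k / η k) * η i with hμ
    have het : β k / η k = 4*T := by
      rw [hηk, div_div_eq_mul_div, mul_comm, mul_div_assoc, div_self hkβ]
      ring
    have hμk : μ k = 4*T := by rw [hμ]; simp only [if_pos rfl]; exact het
    have hμkpos : 0 < μ k := by rw [hμk]; linarith
    have hμ1e : μ j₁ = β j₁ + 4*T := by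
      simp only [hμ, if_neg hj₁k]
      rw [het, hη1v]; ring
    have hμ1pos : 0 < μ j₁ := by
      rw [hμ1e]
      have := neg_abs_le (β j₁); linarith
    have hμ2e : μ j₂ = β j₂ - 8*T + β k := by
      simp only [hμ, if_neg hj₂k]
      rw [het, hη2v]
      field_simp
      ring
    have hμ2neg : μ j₂ < 0 := by
      rw [hμ2e]
      have h1 := le_abs_self (β j₂)
      have h2 := le_abs_self (β k)
      linarith
    have hx2 : ∑ i, μ i • b₁ i = v := by
      have : ∑ i, μ i • b₁ i = ∑ i, μ i • Function.update ⇑b k y i := by rw [hb₁]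
      rw [this, hμc, hβc]
    obtain ⟨b₂, hb₂, path2⟩ := flip_path b₁ μ v hx2 hμ1 k j₂ k j₁ hμ2neg
      (Ne.symm hj₁k) hμkpos hμ1pos (ne_of_gt hμkpos)
    refine ⟨b₂, ?_, ?_⟩
    · rw [hb₂, hb₁, Function.update_idem]
    · exact pathLE_trans path1 path2
lemma range_ncard {f : Fin (d+1) → Pt d} (hf : Function.Injective f) :
    (Set.range f).ncard = d + 1 := by
  rw [← Set.image_univ, Set.ncard_image_of_injective _ hf, Set.ncard_univ,
    Nat.card_eq_fintype_card, Fintype.card_fin]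

lemma exchange_step (b c : AffineBasis (Fin (d+1)) ℝ (Pt d))
    (hne : ¬ Set.range ⇑c ⊆ Set.range ⇑b) :
    ∃ (i : Fin (d+1)) (k : Fin (d+1)), c i ∉ Set.range ⇑b ∧ b k ∉ Set.range ⇑c ∧
      b.coord k (c i) ≠ 0 := by
  classical
  obtain ⟨v, hvc, hvb⟩ := Set.not_subset.mp hne
  obtain ⟨i, rfl⟩ := hvc
  by_contra hcon
  push_neg at hcon
  -- every k with nonzero coordinate has b k ∈ range c
  set s : Finset (Fin (d+1)) := Finset.univ.filter (fun k => b.coord k (c i) ≠ 0) with hs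
  have hmem_s : ∀ k ∈ s, b k ∈ Set.range ⇑c := by
    intro k hks
    rw [hs, Finset.mem_filter] at hks
    by_contra hbk
    exact hks.2 (hcon i k hvb hbk)
  have himg : ⇑b '' ↑s ⊆ Set.range ⇑c \ {c i} := by
    rintro z ⟨k, hks, rfl⟩
    refine ⟨hmem_s k (by exact hks), ?_⟩
    intro hz
    rw [Set.mem_singleton_iff] at hz
    exact hvb (hz ▸ Set.mem_range_self k)
  have hsum : ∑ k ∈ s, b.coord k (c i) = 1 := by
    rw [← coord_sum b (c i)]
    refine Finset.sum_subset (Finset.subset_univ s) ?_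
    intro k _ hk
    rw [hs, Finset.mem_filter] at hk
    push_neg at hk
    exact hk (Finset.mem_univ k)
  -- affine combination over the subtype family
  have hsum' : ∑ k : ↥s, b.coord (k : Fin (d+1)) (c i) = 1 := by
    rw [Finset.sum_coe_sort s (fun k => b.coord k (c i))]
    exact hsum
  have hmem := affineCombination_mem_affineSpan (k := ℝ) (s := (Finset.univ : Finset ↥s))
    (w := fun k : ↥s => b.coord (k : Fin (d+1)) (c i)) hsum' (fun k : ↥s => b (k : Fin (d+1)))
  rw [Finset.affineCombination_eq_linear_combination _ _ _ hsum'] at hmem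
  have hval : ∑ k : ↥s, b.coord (k : Fin (d+1)) (c i) • b (k : Fin (d+1)) = c i := by
    calc ∑ k : ↥s, b.coord (k : Fin (d+1)) (c i) • b (k : Fin (d+1))
        = ∑ k ∈ s, b.coord k (c i) • b k :=
          Finset.sum_coe_sort s (fun k => b.coord k (c i) • b k)
      _ = ∑ k, b.coord k (c i) • b k := by
          refine Finset.sum_subset (Finset.subset_univ s) ?_
          intro k _ hk
          rw [hs, Finset.mem_filter] at hk
          push_neg at hk
          rw [hk (Finset.mem_univ k), zero_smul]
      _ = c i := coord_comb b (c i)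
  rw [hval] at hmem
  have hrange_eq : Set.range (fun k : ↥s => b (k : Fin (d+1))) = ⇑b '' ↑s :=
    (Set.image_eq_range ⇑b ↑s).symm
  rw [hrange_eq] at hmem
  have hmem2 : c i ∈ affineSpan ℝ (Set.range ⇑c \ {c i}) :=
    affineSpan_mono ℝ himg hmem
  have hdiffeq : Set.range ⇑c \ {c i} = ⇑c '' (Set.univ \ {i}) := by
    rw [range_diff_eq c.ind.injective i, Finset.coe_erase, Finset.coe_univ]
  rw [hdiffeq] at hmem2
  exact c.ind.notMem_affineSpan_diff i Set.univ hmem2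

lemma journey (hd : 2 ≤ d) : ∀ (N : ℕ) (b c : AffineBasis (Fin (d+1)) ℝ (Pt d)),
    (Set.range ⇑c \ Set.range ⇑b).ncard ≤ N →
    PathLE d (Gamma d) (SplxP b) (SplxP c) (4 * N) := by
  intro N
  induction N with
  | zero =>
    intro b c hcard
    have hfin : (Set.range ⇑c \ Set.range ⇑b).Finite := (Set.finite_range ⇑c).diff
    have hempty : Set.range ⇑c \ Set.range ⇑b = ∅ := (Set.ncard_eq_zero hfin).mp
      (Nat.le_zero.mp hcard)
    have hsub : Set.range ⇑c ⊆ Set.range ⇑b := Set.diff_eq_empty.mp hempty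
    have heq : Set.range ⇑c = Set.range ⇑b := by
      refine Set.eq_of_subset_of_ncard_le hsub ?_ (Set.finite_range ⇑b)
      rw [range_ncard b.ind.injective, range_ncard c.ind.injective]
    have : SplxP b = SplxP c := by rw [SplxP, SplxP, heq]
    rw [← this] at *
    exact pathLE_refl (splx_gamma b)
  | succ N ih =>
    intro b c hcard
    by_cases hsub : Set.range ⇑c ⊆ Set.range ⇑b
    · have heq : Set.range ⇑c = Set.range ⇑b := by
        refine Set.eq_of_subset_of_ncard_le hsub ?_ (Set.finite_range ⇑b)
        rw [range_ncard b.ind.injective, range_ncard c.ind.injective]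
      have heq2 : SplxP b = SplxP c := by rw [SplxP, SplxP, heq]
      rw [← heq2]
      exact pathLE_mono (Nat.zero_le _) (pathLE_refl (splx_gamma b))
    · obtain ⟨i, k, hci, hbk, hcoord⟩ := exchange_step b c hsub
      obtain ⟨b', hb', path4⟩ := replace_path hd b (c i) k hcoord
      have hrange' : Set.range ⇑b' = insert (c i) (Set.range ⇑b \ {b k}) := by
        rw [hb']; exact range_update b.ind.injective hci k
      have hdiff : Set.range ⇑c \ Set.range ⇑b' = (Set.range ⇑c \ Set.range ⇑b) \ {c i} := by
        rw [hrange']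
        ext z
        simp only [Set.mem_diff, Set.mem_insert_iff, Set.mem_singleton_iff, not_or,
          Set.mem_diff, not_and, not_not]
        constructor
        · rintro ⟨hzc, hz1, hz2⟩
          refine ⟨⟨hzc, fun hzb => ?_⟩, hz1⟩
          have := hz2 hzb
          exact hbk (this ▸ hzc)
        · rintro ⟨⟨hzc, hzb⟩, hzi⟩
          exact ⟨hzc, hzi, fun hzb' => absurd hzb' hzb⟩
      have hN : (Set.range ⇑c \ Set.range ⇑b').ncard ≤ N := by
        have hmemdiff : c i ∈ Set.range ⇑c \ Set.range ⇑b := ⟨Set.mem_range_self i, hci⟩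
        rw [hdiff, Set.ncard_diff_singleton_of_mem hmemdiff]
        omega
      have pathrest := ih b' c hN
      have h44 : 4 * (N+1) = 4 + 4 * N := by ring
      rw [h44]
      exact pathLE_trans path4 pathrest

lemma simplex_in_verts {P : Set (Pt d)} (hP : P ∈ Gamma d) :
    ∃ t ⊆ Set.extremePoints ℝ P, t.Finite ∧ t.ncard = d+1 ∧ affineSpan ℝ t = ⊤ := by
  obtain ⟨t, hts, hspan, hind⟩ := exists_affineIndependent ℝ (Pt d) (Set.extremePoints ℝ P)
  rw [gamma_span_ext hP] at hspan
  have htfin : t.Finite := (gamma_ext_finite hP).subset hts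
  have : Fintype t := htfin.fintype
  have hcard : Fintype.card t = d + 1 := by
    have h1 := hind.affineSpan_eq_top_iff_card_eq_finrank_add_one.mp
      (by rw [Subtype.range_coe]; exact hspan)
    rw [h1, Module.finrank_fin_fun]
  refine ⟨t, hts, htfin, ?_, hspan⟩
  rw [← Nat.card_coe_set_eq, Nat.card_eq_fintype_card, hcard]

lemma basis_of_vertexset {V : Set (Pt d)} (hfin : V.Finite) (hncard : V.ncard = d + 1)
    (hspan : affineSpan ℝ V = ⊤) :
    ∃ b : AffineBasis (Fin (d+1)) ℝ (Pt d), Set.range ⇑b = V := by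
  have : Fintype V := hfin.fintype
  have hcard : Fintype.card V = d + 1 := by
    rw [← Nat.card_eq_fintype_card, Nat.card_coe_set_eq, hncard]
  set e := Fintype.equivFinOfCardEq hcard with he
  set f : Fin (d+1) → Pt d := fun i => ((e.symm i : V) : Pt d) with hf
  have hrange : Set.range f = V := by
    ext z
    constructor
    · rintro ⟨i, rfl⟩; exact (e.symm i).2
    · intro hz; exact ⟨e ⟨z, hz⟩, by rw [hf]; simp⟩
  have hspan' : affineSpan ℝ (Set.range f) = ⊤ := by rw [hrange]; exact hspan
  exact ⟨⟨f, basis_of_span hspan', hspan'⟩, hrange⟩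

lemma toSimplex (hd : 2 ≤ d) : ∀ (N : ℕ) (P : Set (Pt d)), P ∈ Gamma d → nVerts d P ≤ N →
    ∃ (b : AffineBasis (Fin (d+1)) ℝ (Pt d)) (j : ℕ),
      j + (d+1) ≤ nVerts d P ∧ PathLE d (Gamma d) P (SplxP b) j := by
  intro N
  induction N with
  | zero =>
    intro P hP hle
    exfalso
    obtain ⟨t, hts, htfin, htcard, _⟩ := simplex_in_verts hP
    have := Set.ncard_le_ncard hts (gamma_ext_finite hP)
    rw [htcard] at this
    rw [nVerts] at hle
    omega
  | succ N ih =>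
    intro P hP hle
    obtain ⟨t, hts, htfin, htcard, htspan⟩ := simplex_in_verts hP
    have hlow : d + 1 ≤ nVerts d P := by
      have := Set.ncard_le_ncard hts (gamma_ext_finite hP)
      rw [htcard] at this
      exact this
    rcases eq_or_lt_of_le hlow with heq | hlt
    · -- exactly a simplex
      have hteq : t = Set.extremePoints ℝ P := by
        refine Set.eq_of_subset_of_ncard_le hts ?_ (gamma_ext_finite hP)
        rw [htcard]; exact heq.ge
      obtain ⟨b, hbrange⟩ := basis_of_vertexset (gamma_ext_finite hP)
        (by rw [nVerts] at heq; exact heq.symm) (gamma_span_ext hP)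
      have hPb : SplxP b = P := by
        rw [SplxP, hbrange, gamma_minkowski hP]
      refine ⟨b, 0, by omega, ?_⟩
      rw [hPb]
      exact pathLE_refl hP
    · -- delete a vertex
      have hnotsub : ¬ (Set.extremePoints ℝ P ⊆ t) := by
        intro hsub
        have h1 := Set.ncard_le_ncard hsub htfin
        rw [htcard, nVerts] at *
        omega
      obtain ⟨v, hvext, hvt⟩ := Set.not_subset.mp hnotsub
      have htsub : t ⊆ Set.extremePoints ℝ P \ {v} := fun z hz =>
        ⟨hts hz, fun h => hvt (Set.mem_singleton_iff.mp h ▸ hz)⟩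
      have hspan' : affineSpan ℝ (Set.extremePoints ℝ P \ {v}) = ⊤ :=
        le_antisymm le_top (htspan ▸ affineSpan_mono ℝ htsub)
      set P' : Set (Pt d) := convexHull ℝ (Set.extremePoints ℝ P \ {v}) with hP'
      have hP'Γ : P' ∈ Gamma d :=
        gamma_conv_finite ((gamma_ext_finite hP).diff) hspan'
      have hmove : Move d P P' := by
        right; left
        exact ⟨v, ⟨hvext, by rw [FullDim, ← hP', hP', affineSpan_convexHull]; exact hspan'⟩, hP'⟩
      have hnv' : nVerts d P' + 1 ≤ nVerts d P := by
        have h1 : Set.extremePoints ℝ P' ⊆ Set.extremePoints ℝ P \ {v} := by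
          rw [hP']; exact extremePoints_convexHull_subset
        have h2 := Set.ncard_le_ncard h1 (((gamma_ext_finite hP).diff))
        have h3 : (Set.extremePoints ℝ P \ {v}).ncard = nVerts d P - 1 :=
          Set.ncard_diff_singleton_of_mem hvext
        rw [nVerts, nVerts] at *
        omega
      obtain ⟨b, j, hj, path'⟩ := ih P' hP'Γ (by omega)
      refine ⟨b, j + 1, by omega, ?_⟩
      have p1 : PathLE d (Gamma d) P P' 1 := pathLE_single hP hP'Γ hmove
      have := pathLE_trans p1 path'
      rw [Nat.add_comm 1 j] at this
      exact this
end AuxDev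







/-- the distance in `Γ(d)` between a polytope with `n` vertices and a
polytope with `m` vertices is at most `n + m + 4d`. -/
theorem stmt_7 (d n m : ℕ) (hd : 2 ≤ d) (P Q : Set (Pt d))
    (hP : P ∈ Gamma d) (hQ : Q ∈ Gamma d)
    (hn : nVerts d P = n) (hm : nVerts d Q = m) :
    PathLE d (Gamma d) P Q (n + m + 4 * d) := by
  obtain ⟨b, j₁, hj₁, p1⟩ := toSimplex hd (nVerts d P) P hP le_rfl
  obtain ⟨c, j₂, hj₂, p2⟩ := toSimplex hd (nVerts d Q) Q hQ le_rfl
  have hdcard : (Set.range ⇑c \ Set.range ⇑b).ncard ≤ d + 1 := by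
    have h1 := Set.ncard_le_ncard (Set.diff_subset (s := Set.range ⇑c) (t := Set.range ⇑b))
      (Set.finite_range ⇑c)
    rw [range_ncard c.ind.injective] at h1
    exact h1
  have pmid := journey hd (d+1) b c hdcard
  have ptot := pathLE_trans p1 (pathLE_trans pmid (pathLE_symm p2))
  refine pathLE_mono ?_ ptot
  rw [hn] at hj₁
  rw [hm] at hj₂
  omega
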